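/- arXiv:2501.12126 — 5 statements merged into one kernel-verified Lean document; each statement's English description precedes it below -/
import Mathlib

section
/- Let (A,≻,≺) be an anti-dendriform algebra. Then the operation x·y := x≻y + x≺y makes (A,·) an associative algebra. -/
def IsLin (k : Type*) [Field k] {V W : Type*} [AddCommGroup V] [Module k V]
    [AddCommGroup W] [Module k W] (f : V → W) : Prop :=
  ∀ (c : k) (u v : V), f (c • u + v) = c • f u + f v

def IsBilin (k : Type*) [Field k] {U V W : Type*} [AddCommGroup U] [Module k U]
    [AddCommGroup V] [Module k V] [AddCommGroup W] [Module k W]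
    (f : U → V → W) : Prop :=
  (∀ x, IsLin k (f x)) ∧ (∀ y, IsLin k (fun x => f x y))

/-- An anti-dendriform algebra structure given by two bilinear operations `s` (≻) and `p` (≺). -/
def IsADAlg (k : Type*) [Field k] {A : Type*} [AddCommGroup A] [Module k A]
    (s p : A → A → A) : Prop :=
  IsBilin k s ∧ IsBilin k p ∧
  (∀ x y z, s x (s y z) = - s (s x y + p x y) z) ∧
  (∀ x y z, s x (s y z) = - p x (s y z + p y z)) ∧
  (∀ x y z, s x (s y z) = p (p x y) z) ∧
  (∀ x y z, p (s x y) z = s x (p y z))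

theorem stmt0 {k A : Type*} [Field k] [AddCommGroup A] [Module k A]
    (s p : A → A → A) (h : IsADAlg k s p) :
    ∀ x y z : A,
      s (s x y + p x y) z + p (s x y + p x y) z
        = s x (s y z + p y z) + p x (s y z + p y z) := by
  obtain ⟨hs, hp, h1, h2, h3, h4⟩ := h
  have addR : ∀ (f : A → A → A), IsBilin k f → ∀ x u v, f x (u + v) = f x u + f x v := by
    intro f hf x u v
    have := hf.1 x (1 : k) u v
    simpa using this
  have addL : ∀ (f : A → A → A), IsBilin k f → ∀ u v z, f (u + v) z = f u z + f v z := by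
    intro f hf u v z
    have := hf.2 z (1 : k) u v
    simpa using this
  intro x y z
  have e1 : s (s x y + p x y) z = - s x (s y z) := by rw [h1, neg_neg]
  have e2 : p x (s y z + p y z) = - s x (s y z) := by rw [h2, neg_neg]
  rw [addL p ⟨hp.1, hp.2⟩, addR s ⟨hs.1, hs.2⟩, h4, ← h3, e1, e2]
  abel
end

section
/- Let (V, l_≻, r_≻, l_≺, r_≺) be a representation of an anti-dendriform algebra (A,≻,≺). Then (V, -l_≻, -r_≺) is a representation (bimodule) of the associated associative algebra (A,·), where x·y = x≻y + x≺y. -/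
/-- A representation of an anti-dendriform algebra `(A, s, p)` on `V`. -/
def IsADRep (k : Type*) [Field k] {A V : Type*} [AddCommGroup A] [Module k A]
    [AddCommGroup V] [Module k V]
    (s p : A → A → A) (ls rs lp rp : A → V → V) : Prop :=
  IsBilin k ls ∧ IsBilin k rs ∧ IsBilin k lp ∧ IsBilin k rp ∧
  (∀ x y v, ls x (ls y v) = - ls (s x y + p x y) v) ∧
  (∀ x y v, ls x (ls y v) = - lp x (ls y v + lp y v)) ∧
  (∀ x y v, ls x (ls y v) = lp (p x y) v) ∧
  (∀ x y v, rs (s x y) v = - rs y (rs x v + rp x v)) ∧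
  (∀ x y v, rs (s x y) v = - rp (s x y + p x y) v) ∧
  (∀ x y v, rs (s x y) v = rp y (rp x v)) ∧
  (∀ x y v, ls x (rs y v) = - rs y (ls x v + lp x v)) ∧
  (∀ x y v, ls x (rs y v) = - lp x (rs y v + rp y v)) ∧
  (∀ x y v, ls x (rs y v) = rp y (lp x v)) ∧
  (∀ x y v, lp (s x y) v = ls x (lp y v)) ∧
  (∀ x y v, rp y (rs x v) = rs (p x y) v) ∧
  (∀ x y v, rp y (ls x v) = ls x (rp y v))

/-- A representation (bimodule) of an associative algebra `(A, m)` on `V`. -/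
def IsAssocRep (k : Type*) [Field k] {A V : Type*} [AddCommGroup A] [Module k A]
    [AddCommGroup V] [Module k V]
    (m : A → A → A) (l r : A → V → V) : Prop :=
  IsBilin k l ∧ IsBilin k r ∧
  (∀ x y v, l (m x y) v = l x (l y v)) ∧
  (∀ x y v, r (m x y) v = r y (r x v)) ∧
  (∀ x y v, r y (l x v) = l x (r y v))

theorem stmt1 {k A V : Type*} [Field k] [AddCommGroup A] [Module k A]
    [AddCommGroup V] [Module k V]
    (s p : A → A → A) (ls rs lp rp : A → V → V)
    (hA : IsADAlg k s p) (h : IsADRep k s p ls rs lp rp) :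
    IsAssocRep k (fun x y => s x y + p x y)
      (fun x v => - ls x v) (fun x v => - rp x v) := by
  obtain ⟨hls, hrs, hlp, hrp, h5, h6, h7, h8, h9, h10, h11, h12, h13, h14, h15, h16⟩ := h
  have neg : ∀ (f : V → V), IsLin k f → ∀ v, f (-v) = - f v := by
    intro f hf v
    have h0 : f 0 = 0 := by
      have h1 := hf 1 0 0
      simp only [one_smul, add_zero] at h1
      exact right_eq_add.mp h1
    have := hf (-1 : k) v 0
    simp [h0] at this
    simpa using this
  refine ⟨?_, ?_, ?_, ?_, ?_⟩
  · constructor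
    · intro x c u v
      have := hls.1 x c u v
      simp only [this, smul_neg, neg_add]
    · intro y c u v
      have := hls.2 y c u v
      simp only [this, smul_neg, neg_add]
  · constructor
    · intro x c u v
      have := hrp.1 x c u v
      simp only [this, smul_neg, neg_add]
    · intro y c u v
      have := hrp.2 y c u v
      simp only [this, smul_neg, neg_add]
  · intro x y v
    simp only [neg (ls x) (hls.1 x), neg_neg]
    exact (h5 x y v).symm
  · intro x y v
    simp only [neg (rp y) (hrp.1 y), neg_neg]
    rw [← h9, h10]
  · intro x y v
    simp only [neg (rp y) (hrp.1 y), neg (ls x) (hls.1 x), neg_neg, neg_inj]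
    exact h16 x y v
end

section
/- Let (V, l_≻, r_≻, l_≺, r_≺) be a representation of an anti-dendriform algebra (A,≻,≺). Then (V, l_≻ + l_≺, r_≻ + r_≺) is a representation of the associated associative algebra (A,·). -/
lemma IsLin.add' {k : Type*} [Field k] {V W : Type*} [AddCommGroup V] [Module k V]
    [AddCommGroup W] [Module k W] {f g : V → W} (hf : IsLin k f) (hg : IsLin k g) :
    IsLin k (fun v => f v + g v) := by
  intro c u v
  simp only [hf c u v, hg c u v, smul_add]
  abel

lemma IsLin.map_add {k : Type*} [Field k] {V W : Type*} [AddCommGroup V] [Module k V]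
    [AddCommGroup W] [Module k W] {f : V → W} (hf : IsLin k f) (u v : V) :
    f (u + v) = f u + f v := by
  have := hf (1 : k) u v; simpa using this

theorem stmt2 {k A V : Type*} [Field k] [AddCommGroup A] [Module k A]
    [AddCommGroup V] [Module k V]
    (s p : A → A → A) (ls rs lp rp : A → V → V)
    (hA : IsADAlg k s p) (h : IsADRep k s p ls rs lp rp) :
    IsAssocRep k (fun x y => s x y + p x y)
      (fun x v => ls x v + lp x v) (fun x v => rs x v + rp x v) := by
  obtain ⟨hls, hrs, hlp, hrp, h5, h6, h7, h8, h9, h10, h11, h12, h13, h14, h15, h16⟩ := h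
  refine ⟨⟨fun x => (hls.1 x).add' (hlp.1 x), fun v => (hls.2 v).add' (hlp.2 v)⟩,
    ⟨fun x => (hrs.1 x).add' (hrp.1 x), fun v => (hrs.2 v).add' (hrp.2 v)⟩, ?_, ?_, ?_⟩
  · intro x y v
    have e2 : lp (s x y + p x y) v = lp (s x y) v + lp (p x y) v :=
      (hlp.2 v).map_add _ _
    have e3 : ls x (ls y v + lp y v) = ls x (ls y v) + ls x (lp y v) :=
      (hls.1 x).map_add _ _
    have a1 : ls (s x y + p x y) v = -(ls x (ls y v)) := by rw [h5, neg_neg]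
    have a4 : lp x (ls y v + lp y v) = -(ls x (ls y v)) := by rw [h6, neg_neg]
    simp only [e2, e3, a1, a4, ← h14, ← h7]
    abel
  · intro x y v
    have e1 : rs (s x y + p x y) v = rs (s x y) v + rs (p x y) v :=
      (hrs.2 v).map_add _ _
    have e3 : rp y (rs x v + rp x v) = rp y (rs x v) + rp y (rp x v) :=
      (hrp.1 y).map_add _ _
    have a1 : rp (s x y + p x y) v = -(rs (s x y) v) := by rw [h9, neg_neg]
    have a2 : rs y (rs x v + rp x v) = -(rs (s x y) v) := by rw [h8, neg_neg]
    simp only [e1, e3, a1, a2, ← h15, ← h10]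
    abel
  · intro x y v
    have e1 : rp y (ls x v + lp x v) = rp y (ls x v) + rp y (lp x v) :=
      (hrp.1 y).map_add _ _
    have e2 : ls x (rs y v + rp y v) = ls x (rs y v) + ls x (rp y v) :=
      (hls.1 x).map_add _ _
    have a1 : rs y (ls x v + lp x v) = -(ls x (rs y v)) := by rw [h11, neg_neg]
    have a2 : lp x (rs y v + rp y v) = -(ls x (rs y v)) := by rw [h12, neg_neg]
    simp only [e1, e2, a1, a2, h16, ← h13]
    abel
end

section
/- Let (V, l_≻, r_≻, l_≺, r_≺) be a representation of an anti-dendriform algebra (A,≻,≺). Then (V*, -(r_≺* + r_≻*), l_≺*, r_≻*, -(l_≺* + l_≻*)) is a representation of (A,≻,≺) on the dual space V*, where f*: A → End(V*) is defined by ⟨f*(x)u*, v⟩ = ⟨u*, f(x)v⟩. -/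
/-- Representation of an anti-dendriform algebra with the action maps bundled as
endomorphisms of `V`; `IsLin k ls` expresses linearity of `ls : A → End V`. -/
def IsADRepL (k : Type*) [Field k] {A V : Type*} [AddCommGroup A] [Module k A]
    [AddCommGroup V] [Module k V]
    (s p : A → A → A) (ls rs lp rp : A → V →ₗ[k] V) : Prop :=
  IsLin k ls ∧ IsLin k rs ∧ IsLin k lp ∧ IsLin k rp ∧
  (∀ x y v, ls x (ls y v) = - ls (s x y + p x y) v) ∧
  (∀ x y v, ls x (ls y v) = - lp x (ls y v + lp y v)) ∧
  (∀ x y v, ls x (ls y v) = lp (p x y) v) ∧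
  (∀ x y v, rs (s x y) v = - rs y (rs x v + rp x v)) ∧
  (∀ x y v, rs (s x y) v = - rp (s x y + p x y) v) ∧
  (∀ x y v, rs (s x y) v = rp y (rp x v)) ∧
  (∀ x y v, ls x (rs y v) = - rs y (ls x v + lp x v)) ∧
  (∀ x y v, ls x (rs y v) = - lp x (rs y v + rp y v)) ∧
  (∀ x y v, ls x (rs y v) = rp y (lp x v)) ∧
  (∀ x y v, lp (s x y) v = ls x (lp y v)) ∧
  (∀ x y v, rp y (rs x v) = rs (p x y) v) ∧
  (∀ x y v, rp y (ls x v) = ls x (rp y v))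

theorem stmt3 {k A V : Type*} [Field k] [AddCommGroup A] [Module k A]
    [AddCommGroup V] [Module k V] [FiniteDimensional k V]
    (s p : A → A → A) (ls rs lp rp : A → V →ₗ[k] V)
    (hA : IsADAlg k s p) (h : IsADRepL k s p ls rs lp rp) :
    IsADRepL k s p
      (fun x => -((rp x).dualMap + (rs x).dualMap))
      (fun x => (lp x).dualMap)
      (fun x => (rs x).dualMap)
      (fun x => -((lp x).dualMap + (ls x).dualMap)) := by
  obtain ⟨hls, hrs, hlp, hrp, h5, h6, h7, h8, h9, h10, h11, h12, h13, h14, h15, h16⟩ := h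
  have lsadd : ∀ a b (w : V), ls (a + b) w = ls a w + ls b w := fun a b w => by
    have h1 := hls 1 a b; rw [one_smul, one_smul] at h1; rw [h1]; simp
  have rsadd : ∀ a b (w : V), rs (a + b) w = rs a w + rs b w := fun a b w => by
    have h1 := hrs 1 a b; rw [one_smul, one_smul] at h1; rw [h1]; simp
  have lpadd : ∀ a b (w : V), lp (a + b) w = lp a w + lp b w := fun a b w => by
    have h1 := hlp 1 a b; rw [one_smul, one_smul] at h1; rw [h1]; simp
  have rpadd : ∀ a b (w : V), rp (a + b) w = rp a w + rp b w := fun a b w => by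
    have h1 := hrp 1 a b; rw [one_smul, one_smul] at h1; rw [h1]; simp
  refine ⟨?_, ?_, ?_, ?_, ?_, ?_, ?_, ?_, ?_, ?_, ?_, ?_, ?_, ?_, ?_, ?_⟩
  · intro c a b; ext φ w
    simp only [hrp c a b, hrs c a b, LinearMap.neg_apply, LinearMap.add_apply,
      LinearMap.smul_apply, LinearMap.dualMap_apply, map_add, map_smul, smul_eq_mul]
    ring
  · intro c a b; ext φ w
    simp only [hlp c a b, LinearMap.neg_apply, LinearMap.add_apply,
      LinearMap.smul_apply, LinearMap.dualMap_apply, map_add, map_smul, smul_eq_mul]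
  · intro c a b; ext φ w
    simp only [hrs c a b, LinearMap.neg_apply, LinearMap.add_apply,
      LinearMap.smul_apply, LinearMap.dualMap_apply, map_add, map_smul, smul_eq_mul]
  · intro c a b; ext φ w
    simp only [hlp c a b, hls c a b, LinearMap.neg_apply, LinearMap.add_apply,
      LinearMap.smul_apply, LinearMap.dualMap_apply, map_add, map_smul, smul_eq_mul]
    ring
  · intro x y v; ext w
    linear_combination (norm := (simp only [LinearMap.dualMap_apply, LinearMap.neg_apply,
      LinearMap.add_apply, map_add, map_neg]; ring1))
      - congrArg v (h10 x y w) + congrArg v (h15 x y w) + congrArg v (h8 x y w) - congrArg v (h9 x y w) - congrArg v (rsadd (s x y) (p x y) w)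
  · intro x y v; ext w
    linear_combination (norm := (simp only [LinearMap.dualMap_apply, LinearMap.neg_apply,
      LinearMap.add_apply, map_add, map_neg]; ring1))
      congrArg v (h8 x y w) - congrArg v (h10 x y w)
  · intro x y v; ext w
    linear_combination (norm := (simp only [LinearMap.dualMap_apply, LinearMap.neg_apply,
      LinearMap.add_apply, map_add, map_neg]; ring1))
      congrArg v (h8 x y w) - congrArg v (h10 x y w) + congrArg v (h15 x y w)
  · intro x y v; ext w
    linear_combination (norm := (simp only [LinearMap.dualMap_apply, LinearMap.neg_apply,
      LinearMap.add_apply, map_add, map_neg]; ring1))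
      congrArg v (h14 x y w)
  · intro x y v; ext w
    linear_combination (norm := (simp only [LinearMap.dualMap_apply, LinearMap.neg_apply,
      LinearMap.add_apply, map_add, map_neg]; ring1))
      - congrArg v (lpadd (s x y) (p x y) w) - congrArg v (h5 x y w) + congrArg v (h7 x y w)
  · intro x y v; ext w
    linear_combination (norm := (simp only [LinearMap.dualMap_apply, LinearMap.neg_apply,
      LinearMap.add_apply, map_add, map_neg]; ring1))
      congrArg v (h14 x y w) - congrArg v (h6 x y w)
  · intro x y v; ext w
    linear_combination (norm := (simp only [LinearMap.dualMap_apply, LinearMap.neg_apply,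
      LinearMap.add_apply, map_add, map_neg]; ring1))
      - congrArg v (h12 y x w) + congrArg v (h13 y x w)
  · intro x y v; ext w
    linear_combination (norm := (simp only [LinearMap.dualMap_apply, LinearMap.neg_apply,
      LinearMap.add_apply, map_add, map_neg]; ring1))
      - congrArg v (h12 y x w)
  · intro x y v; ext w
    linear_combination (norm := (simp only [LinearMap.dualMap_apply, LinearMap.neg_apply,
      LinearMap.add_apply, map_add, map_neg]; ring1))
      - congrArg v (h12 y x w) + congrArg v (h11 y x w)
  · intro x y v; ext w
    linear_combination (norm := (simp only [LinearMap.dualMap_apply, LinearMap.neg_apply,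
      LinearMap.add_apply, map_add, map_neg]; ring1))
      congrArg v (h8 x y w)
  · intro x y v; ext w
    linear_combination (norm := (simp only [LinearMap.dualMap_apply, LinearMap.neg_apply,
      LinearMap.add_apply, map_add, map_neg]; ring1))
      - congrArg v (h6 x y w) + congrArg v (h7 x y w)
  · intro x y v; ext w
    linear_combination (norm := (simp only [LinearMap.dualMap_apply, LinearMap.neg_apply,
      LinearMap.add_apply, map_add, map_neg]; ring1))
      - congrArg v (h13 y x w) + congrArg v (h11 y x w) + congrArg v (h16 y x w) - congrArg v (h12 y x w)
end

section
/- Let (A₁,≻₁,≺₁) and (A₂,≻₂,≺₂) be anti-dendriform algebras with a matched pair structure (l_{≻₁}, r_{≻₁}, l_{≺₁}, r_{≺₁}, l_{≻₂}, r_{≻₂}, l_{≺₂}, r_{≺₂}). Then the direct sum A₁ ⊕ A₂ with operations (x,a)≻(y,b) = (x≻₁y + l_{≻₂}(a)y + r_{≻₂}(b)x, a≻₂b + l_{≻₁}(x)b + r_{≻₁}(y)a) and (x,a)≺(y,b) = (x≺₁y + l_{≺₂}(a)y + r_{≺₂}(b)x, a≺₂b + l_{≺₁}(x)b + r_{≺₁}(y)a)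 is an anti-dendriform algebra (the bicrossed product A₁ ⋈ A₂). -/
/-- A matched pair of anti-dendriform algebras (conditions (M1)–(M12)). -/
def IsADMatchedPair (k : Type*) [Field k] {A B : Type*} [AddCommGroup A] [Module k A]
    [AddCommGroup B] [Module k B]
    (s1 p1 : A → A → A) (s2 p2 : B → B → B)
    (ls1 rs1 lp1 rp1 : A → B → B) (ls2 rs2 lp2 rp2 : B → A → A) : Prop :=
  IsADRep k s1 p1 ls1 rs1 lp1 rp1 ∧
  IsADRep k s2 p2 ls2 rs2 lp2 rp2 ∧
  (∀ x y c, s1 x (rs2 c y) + rs2 (ls1 y c) x = - rs2 c (s1 x y + p1 x y)) ∧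
  (∀ x y c, s1 x (rs2 c y) + rs2 (ls1 y c) x
      = - p1 x (rs2 c y + rp2 c y) - rp2 (ls1 y c + lp1 y c) x) ∧
  (∀ x y c, s1 x (rs2 c y) + rs2 (ls1 y c) x = rp2 c (p1 x y)) ∧
  (∀ x z b, s1 x (ls2 b z) + rs2 (rs1 z b) x
      = - s1 (rs2 b x + rp2 b x) z - ls2 (ls1 x b + lp1 x b) z) ∧
  (∀ x z b, s1 x (ls2 b z) + rs2 (rs1 z b) x
      = - p1 x (ls2 b z + lp2 b z) - rp2 (rs1 z b + rp1 z b) x) ∧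
  (∀ x z b, s1 x (ls2 b z) + rs2 (rs1 z b) x = p1 (rp2 b x) z + lp2 (lp1 x b) z) ∧
  (∀ y z a, ls2 a (s1 y z) = - s1 (ls2 a y + lp2 a y) z - ls2 (rs1 y a + rp1 y a) z) ∧
  (∀ y z a, ls2 a (s1 y z) = - lp2 a (s1 y z + p1 y z)) ∧
  (∀ y z a, ls2 a (s1 y z) = p1 (lp2 a y) z + lp2 (rp1 y a) z) ∧
  (∀ x b c, ls1 x (s2 b c) = - s2 (ls1 x b + lp1 x b) c - ls1 (rs2 b x + rp2 b x) c) ∧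
  (∀ x b c, ls1 x (s2 b c) = - lp1 x (s2 b c + p2 b c)) ∧
  (∀ x b c, ls1 x (s2 b c) = p2 (lp1 x b) c + lp1 (rp2 b x) c) ∧
  (∀ y a c, s2 a (ls1 y c) + rs1 (rs2 c y) a
      = - s2 (rs1 y a + rp1 y a) c - ls1 (ls2 a y + lp2 a y) c) ∧
  (∀ y a c, s2 a (ls1 y c) + rs1 (rs2 c y) a
      = - p2 a (ls1 y c + lp1 y c) - rp1 (rs2 c y + rp2 c y) a) ∧
  (∀ y a c, s2 a (ls1 y c) + rs1 (rs2 c y) a = p2 (rp1 y a) c + lp1 (lp2 a y) c) ∧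
  (∀ z a b, s2 a (rs1 z b) + rs1 (ls2 b z) a = - rs1 z (s2 a b + p2 a b)) ∧
  (∀ z a b, s2 a (rs1 z b) + rs1 (ls2 b z) a
      = - p2 a (rs1 z b + rp1 z b) - rp1 (ls2 b z + lp2 b z) a) ∧
  (∀ z a b, s2 a (rs1 z b) + rs1 (ls2 b z) a = rp1 z (p2 a b)) ∧
  (∀ x y c, rp2 c (s1 x y) = s1 x (rp2 c y) + rs2 (lp1 y c) x) ∧
  (∀ x z b, p1 (rs2 b x) z + lp2 (ls1 x b) z = s1 x (lp2 b z) + rs2 (rp1 z b) x) ∧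
  (∀ y z a, p1 (ls2 a y) z + lp2 (rs1 y a) z = ls2 a (p1 y z)) ∧
  (∀ x b c, p2 (ls1 x b) c + lp1 (rs2 b x) c = ls1 x (p2 b c)) ∧
  (∀ y a c, p2 (rs1 y a) c + lp1 (ls2 a y) c = s2 a (lp1 y c) + rs1 (rp2 c y) a) ∧
  (∀ z a b, rp1 z (s2 a b) = s2 a (rp1 z b) + rs1 (lp2 b z) a)


lemma lin_add {k : Type*} [Field k] {V W : Type*} [AddCommGroup V] [Module k V]
    [AddCommGroup W] [Module k W] {f : V → W} (h : IsLin k f) (u v : V) :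
    f (u + v) = f u + f v := by
  have := h (1 : k) u v
  simpa using this

theorem stmt8 {k A B : Type*} [Field k] [AddCommGroup A] [Module k A]
    [AddCommGroup B] [Module k B]
    (s1 p1 : A → A → A) (s2 p2 : B → B → B)
    (ls1 rs1 lp1 rp1 : A → B → B) (ls2 rs2 lp2 rp2 : B → A → A)
    (h1 : IsADAlg k s1 p1) (h2 : IsADAlg k s2 p2)
    (hmp : IsADMatchedPair k s1 p1 s2 p2 ls1 rs1 lp1 rp1 ls2 rs2 lp2 rp2) :
    IsADAlg k
      (fun u v : A × B =>
        ((s1 u.1 v.1 + ls2 u.2 v.1 + rs2 v.2 u.1,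
          s2 u.2 v.2 + ls1 u.1 v.2 + rs1 v.1 u.2) : A × B))
      (fun u v : A × B =>
        ((p1 u.1 v.1 + lp2 u.2 v.1 + rp2 v.2 u.1,
          p2 u.2 v.2 + lp1 u.1 v.2 + rp1 v.1 u.2) : A × B)) := by
  obtain ⟨hbs1, hbp1, A3, A4, A5, A6⟩ := h1
  obtain ⟨hbs2, hbp2, B3, B4, B5, B6⟩ := h2
  obtain ⟨rep1, rep2, C1, C2, C3, C4, C5, C6, C7, C8, C9, C10, C11, C12, C13, C14, C15,
    C16, C17, C18, C19, C20, C21, C22, C23, C24⟩ := hmp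
  obtain ⟨hbls1, hbrs1, hblp1, hbrp1, R1a, R2a, R3a, R4a, R5a, R6a, R7a, R8a, R9a, R10a,
    R11a, R12a⟩ := rep1
  obtain ⟨hbls2, hbrs2, hblp2, hbrp2, R1b, R2b, R3b, R4b, R5b, R6b, R7b, R8b, R9b, R10b,
    R11b, R12b⟩ := rep2
  have Es1r : ∀ x u v, s1 x (u + v) = s1 x u + s1 x v := fun x u v => lin_add (hbs1.1 x) u v
  have Es1l : ∀ u v y, s1 (u + v) y = s1 u y + s1 v y := fun u v y => lin_add (hbs1.2 y) u v
  have Ls1r : ∀ x (c : k) u v, s1 x (c • u + v) = c • s1 x u + s1 x v := hbs1.1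
  have Ls1l : ∀ y (c : k) u v, s1 (c • u + v) y = c • s1 u y + s1 v y := hbs1.2
  have Ep1r : ∀ x u v, p1 x (u + v) = p1 x u + p1 x v := fun x u v => lin_add (hbp1.1 x) u v
  have Ep1l : ∀ u v y, p1 (u + v) y = p1 u y + p1 v y := fun u v y => lin_add (hbp1.2 y) u v
  have Lp1r : ∀ x (c : k) u v, p1 x (c • u + v) = c • p1 x u + p1 x v := hbp1.1
  have Lp1l : ∀ y (c : k) u v, p1 (c • u + v) y = c • p1 u y + p1 v y := hbp1.2
  have Es2r : ∀ x u v, s2 x (u + v) = s2 x u + s2 x v := fun x u v => lin_add (hbs2.1 x) u v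
  have Es2l : ∀ u v y, s2 (u + v) y = s2 u y + s2 v y := fun u v y => lin_add (hbs2.2 y) u v
  have Ls2r : ∀ x (c : k) u v, s2 x (c • u + v) = c • s2 x u + s2 x v := hbs2.1
  have Ls2l : ∀ y (c : k) u v, s2 (c • u + v) y = c • s2 u y + s2 v y := hbs2.2
  have Ep2r : ∀ x u v, p2 x (u + v) = p2 x u + p2 x v := fun x u v => lin_add (hbp2.1 x) u v
  have Ep2l : ∀ u v y, p2 (u + v) y = p2 u y + p2 v y := fun u v y => lin_add (hbp2.2 y) u v
  have Lp2r : ∀ x (c : k) u v, p2 x (c • u + v) = c • p2 x u + p2 x v := hbp2.1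
  have Lp2l : ∀ y (c : k) u v, p2 (c • u + v) y = c • p2 u y + p2 v y := hbp2.2
  have Els1r : ∀ x u v, ls1 x (u + v) = ls1 x u + ls1 x v := fun x u v => lin_add (hbls1.1 x) u v
  have Els1l : ∀ u v y, ls1 (u + v) y = ls1 u y + ls1 v y := fun u v y => lin_add (hbls1.2 y) u v
  have Lls1r : ∀ x (c : k) u v, ls1 x (c • u + v) = c • ls1 x u + ls1 x v := hbls1.1
  have Lls1l : ∀ y (c : k) u v, ls1 (c • u + v) y = c • ls1 u y + ls1 v y := hbls1.2
  have Ers1r : ∀ x u v, rs1 x (u + v) = rs1 x u + rs1 x v := fun x u v => lin_add (hbrs1.1 x) u v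
  have Ers1l : ∀ u v y, rs1 (u + v) y = rs1 u y + rs1 v y := fun u v y => lin_add (hbrs1.2 y) u v
  have Lrs1r : ∀ x (c : k) u v, rs1 x (c • u + v) = c • rs1 x u + rs1 x v := hbrs1.1
  have Lrs1l : ∀ y (c : k) u v, rs1 (c • u + v) y = c • rs1 u y + rs1 v y := hbrs1.2
  have Elp1r : ∀ x u v, lp1 x (u + v) = lp1 x u + lp1 x v := fun x u v => lin_add (hblp1.1 x) u v
  have Elp1l : ∀ u v y, lp1 (u + v) y = lp1 u y + lp1 v y := fun u v y => lin_add (hblp1.2 y) u v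
  have Llp1r : ∀ x (c : k) u v, lp1 x (c • u + v) = c • lp1 x u + lp1 x v := hblp1.1
  have Llp1l : ∀ y (c : k) u v, lp1 (c • u + v) y = c • lp1 u y + lp1 v y := hblp1.2
  have Erp1r : ∀ x u v, rp1 x (u + v) = rp1 x u + rp1 x v := fun x u v => lin_add (hbrp1.1 x) u v
  have Erp1l : ∀ u v y, rp1 (u + v) y = rp1 u y + rp1 v y := fun u v y => lin_add (hbrp1.2 y) u v
  have Lrp1r : ∀ x (c : k) u v, rp1 x (c • u + v) = c • rp1 x u + rp1 x v := hbrp1.1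
  have Lrp1l : ∀ y (c : k) u v, rp1 (c • u + v) y = c • rp1 u y + rp1 v y := hbrp1.2
  have Els2r : ∀ x u v, ls2 x (u + v) = ls2 x u + ls2 x v := fun x u v => lin_add (hbls2.1 x) u v
  have Els2l : ∀ u v y, ls2 (u + v) y = ls2 u y + ls2 v y := fun u v y => lin_add (hbls2.2 y) u v
  have Lls2r : ∀ x (c : k) u v, ls2 x (c • u + v) = c • ls2 x u + ls2 x v := hbls2.1
  have Lls2l : ∀ y (c : k) u v, ls2 (c • u + v) y = c • ls2 u y + ls2 v y := hbls2.2
  have Ers2r : ∀ x u v, rs2 x (u + v) = rs2 x u + rs2 x v := fun x u v => lin_add (hbrs2.1 x) u v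
  have Ers2l : ∀ u v y, rs2 (u + v) y = rs2 u y + rs2 v y := fun u v y => lin_add (hbrs2.2 y) u v
  have Lrs2r : ∀ x (c : k) u v, rs2 x (c • u + v) = c • rs2 x u + rs2 x v := hbrs2.1
  have Lrs2l : ∀ y (c : k) u v, rs2 (c • u + v) y = c • rs2 u y + rs2 v y := hbrs2.2
  have Elp2r : ∀ x u v, lp2 x (u + v) = lp2 x u + lp2 x v := fun x u v => lin_add (hblp2.1 x) u v
  have Elp2l : ∀ u v y, lp2 (u + v) y = lp2 u y + lp2 v y := fun u v y => lin_add (hblp2.2 y) u v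
  have Llp2r : ∀ x (c : k) u v, lp2 x (c • u + v) = c • lp2 x u + lp2 x v := hblp2.1
  have Llp2l : ∀ y (c : k) u v, lp2 (c • u + v) y = c • lp2 u y + lp2 v y := hblp2.2
  have Erp2r : ∀ x u v, rp2 x (u + v) = rp2 x u + rp2 x v := fun x u v => lin_add (hbrp2.1 x) u v
  have Erp2l : ∀ u v y, rp2 (u + v) y = rp2 u y + rp2 v y := fun u v y => lin_add (hbrp2.2 y) u v
  have Lrp2r : ∀ x (c : k) u v, rp2 x (c • u + v) = c • rp2 x u + rp2 x v := hbrp2.1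
  have Lrp2l : ∀ y (c : k) u v, rp2 (c • u + v) y = c • rp2 u y + rp2 v y := hbrp2.2
  refine ⟨⟨fun u c v w => ?_, fun u c v w => ?_⟩, ⟨fun u c v w => ?_, fun u c v w => ?_⟩,
    fun u v w => ?_, fun u v w => ?_, fun u v w => ?_, fun u v w => ?_⟩
  · refine Prod.ext ?_ ?_ <;> simp only [Prod.fst_add, Prod.snd_add, Prod.smul_fst, Prod.smul_snd, Ls1r, Ls1l, Ls2r, Ls2l, Lp1r, Lp1l, Lp2r, Lp2l, Lls1r, Lls1l, Lrs1r, Lrs1l, Llp1r, Llp1l, Lrp1r, Lrp1l, Lls2r, Lls2l, Lrs2r, Lrs2l, Llp2r, Llp2l, Lrp2r, Lrp2l, smul_add] <;> abel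
  · refine Prod.ext ?_ ?_ <;> simp only [Prod.fst_add, Prod.snd_add, Prod.smul_fst, Prod.smul_snd, Ls1r, Ls1l, Ls2r, Ls2l, Lp1r, Lp1l, Lp2r, Lp2l, Lls1r, Lls1l, Lrs1r, Lrs1l, Llp1r, Llp1l, Lrp1r, Lrp1l, Lls2r, Lls2l, Lrs2r, Lrs2l, Llp2r, Llp2l, Lrp2r, Lrp2l, smul_add] <;> abel
  · refine Prod.ext ?_ ?_ <;> simp only [Prod.fst_add, Prod.snd_add, Prod.smul_fst, Prod.smul_snd, Ls1r, Ls1l, Ls2r, Ls2l, Lp1r, Lp1l, Lp2r, Lp2l, Lls1r, Lls1l, Lrs1r, Lrs1l, Llp1r, Llp1l, Lrp1r, Lrp1l, Lls2r, Lls2l, Lrs2r, Lrs2l, Llp2r, Llp2l, Lrp2r, Lrp2l, smul_add] <;> abel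
  · refine Prod.ext ?_ ?_ <;> simp only [Prod.fst_add, Prod.snd_add, Prod.smul_fst, Prod.smul_snd, Ls1r, Ls1l, Ls2r, Ls2l, Lp1r, Lp1l, Lp2r, Lp2l, Lls1r, Lls1l, Lrs1r, Lrs1l, Llp1r, Llp1l, Lrp1r, Lrp1l, Lls2r, Lls2l, Lrs2r, Lrs2l, Llp2r, Llp2l, Lrp2r, Lrp2l, smul_add] <;> abel
  · obtain ⟨x, a⟩ := u; obtain ⟨y, b⟩ := v; obtain ⟨z, c⟩ := w
    have e1 := A3 x y z
    have e2 := C4 x z b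
    have e3 := C1 x y c
    have e4 := C7 y z a
    have e5 := R1b a b z
    have e6 := R7b a c y
    have e7 := R4b b c x
    have f1 := B3 a b c
    have f2 := C13 y a c
    have f3 := C16 z a b
    have f4 := C10 x b c
    have f5 := R1a x y c
    have f6 := R7a x z b
    have f7 := R4a y z a
    simp only [Prod.fst_add, Prod.snd_add, Prod.fst_neg, Prod.snd_neg, Es1r, Es1l, Ep1r, Ep1l, Es2r, Es2l, Ep2r, Ep2l, Els1r, Els1l, Ers1r, Ers1l, Elp1r, Elp1l, Erp1r, Erp1l, Els2r, Els2l, Ers2r, Ers2l, Elp2r, Elp2l, Erp2r, Erp2l] at e1 e2 e3 e4 e5 e6 e7 f1 f2 f3 f4 f5 f6 f7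
    refine Prod.ext ?_ ?_ <;> simp only [Prod.fst_add, Prod.snd_add, Prod.fst_neg, Prod.snd_neg, Es1r, Es1l, Ep1r, Ep1l, Es2r, Es2l, Ep2r, Ep2l, Els1r, Els1l, Ers1r, Ers1l, Elp1r, Elp1l, Erp1r, Erp1l, Els2r, Els2l, Ers2r, Ers2l, Elp2r, Elp2l, Erp2r, Erp2l]
    · linear_combination (norm := abel) e1 + e2 + e3 + e4 + e5 + e6 + e7
    · linear_combination (norm := abel) f1 + f2 + f3 + f4 + f5 + f6 + f7
  · obtain ⟨x, a⟩ := u; obtain ⟨y, b⟩ := v; obtain ⟨z, c⟩ := w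
    have e1 := A4 x y z
    have e2 := C5 x z b
    have e3 := C2 x y c
    have e4 := C8 y z a
    have e5 := R2b a b z
    have e6 := R8b a c y
    have e7 := R5b b c x
    have f1 := B4 a b c
    have f2 := C17 z a b
    have f3 := C14 y a c
    have f4 := C11 x b c
    have f5 := R2a x y c
    have f6 := R8a x z b
    have f7 := R5a y z a
    simp only [Prod.fst_add, Prod.snd_add, Prod.fst_neg, Prod.snd_neg, Es1r, Es1l, Ep1r, Ep1l, Es2r, Es2l, Ep2r, Ep2l, Els1r, Els1l, Ers1r, Ers1l, Elp1r, Elp1l, Erp1r, Erp1l, Els2r, Els2l, Ers2r, Ers2l, Elp2r, Elp2l, Erp2r, Erp2l] at e1 e2 e3 e4 e5 e6 e7 f1 f2 f3 f4 f5 f6 f7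
    refine Prod.ext ?_ ?_ <;> simp only [Prod.fst_add, Prod.snd_add, Prod.fst_neg, Prod.snd_neg, Es1r, Es1l, Ep1r, Ep1l, Es2r, Es2l, Ep2r, Ep2l, Els1r, Els1l, Ers1r, Ers1l, Elp1r, Elp1l, Erp1r, Erp1l, Els2r, Els2l, Ers2r, Ers2l, Elp2r, Elp2l, Erp2r, Erp2l]
    · linear_combination (norm := abel) e1 + e2 + e3 + e4 + e5 + e6 + e7
    · linear_combination (norm := abel) f1 + f2 + f3 + f4 + f5 + f6 + f7
  · obtain ⟨x, a⟩ := u; obtain ⟨y, b⟩ := v; obtain ⟨z, c⟩ := w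
    have e1 := A5 x y z
    have e2 := C6 x z b
    have e3 := C3 x y c
    have e4 := C9 y z a
    have e5 := R3b a b z
    have e6 := R9b a c y
    have e7 := R6b b c x
    have f1 := B5 a b c
    have f2 := C18 z a b
    have f3 := C15 y a c
    have f4 := C12 x b c
    have f5 := R3a x y c
    have f6 := R9a x z b
    have f7 := R6a y z a
    simp -failIfUnchanged only [Prod.fst_add, Prod.snd_add, Prod.fst_neg, Prod.snd_neg, Es1r, Es1l, Ep1r, Ep1l, Es2r, Es2l, Ep2r, Ep2l, Els1r, Els1l, Ers1r, Ers1l, Elp1r, Elp1l, Erp1r, Erp1l, Els2r, Els2l, Ers2r, Ers2l, Elp2r, Elp2l, Erp2r, Erp2l] at e1 e2 e3 e4 e5 e6 e7 f1 f2 f3 f4 f5 f6 f7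
    refine Prod.ext ?_ ?_ <;> simp only [Prod.fst_add, Prod.snd_add, Prod.fst_neg, Prod.snd_neg, Es1r, Es1l, Ep1r, Ep1l, Es2r, Es2l, Ep2r, Ep2l, Els1r, Els1l, Ers1r, Ers1l, Elp1r, Elp1l, Erp1r, Erp1l, Els2r, Els2l, Ers2r, Ers2l, Elp2r, Elp2l, Erp2r, Erp2l]
    · linear_combination (norm := abel) e1 + e2 + e3 + e4 + e5 + e6 + e7
    · linear_combination (norm := abel) f1 + f2 + f3 + f4 + f5 + f6 + f7
  · obtain ⟨x, a⟩ := u; obtain ⟨y, b⟩ := v; obtain ⟨z, c⟩ := w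
    have e1 := A6 x y z
    have e2 := C21 y z a
    have e3 := C20 x z b
    have e4 := R10b a b z
    have e5 := C19 x y c
    have e6 := R12b a c y
    have e7 := R11b b c x
    have f1 := B6 a b c
    have f2 := C22 x b c
    have f3 := C23 y a c
    have f4 := R10a x y c
    have f5 := C24 z a b
    have f6 := R12a x z b
    have f7 := R11a y z a
    simp -failIfUnchanged only [Prod.fst_add, Prod.snd_add, Prod.fst_neg, Prod.snd_neg, Es1r, Es1l, Ep1r, Ep1l, Es2r, Es2l, Ep2r, Ep2l, Els1r, Els1l, Ers1r, Ers1l, Elp1r, Elp1l, Erp1r, Erp1l, Els2r, Els2l, Ers2r, Ers2l, Elp2r, Elp2l, Erp2r, Erp2l] at e1 e2 e3 e4 e5 e6 e7 f1 f2 f3 f4 f5 f6 f7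
    refine Prod.ext ?_ ?_ <;> simp only [Prod.fst_add, Prod.snd_add, Prod.fst_neg, Prod.snd_neg, Es1r, Es1l, Ep1r, Ep1l, Es2r, Es2l, Ep2r, Ep2l, Els1r, Els1l, Ers1r, Ers1l, Elp1r, Elp1l, Erp1r, Erp1l, Els2r, Els2l, Ers2r, Ers2l, Elp2r, Elp2l, Erp2r, Erp2l]
    · linear_combination (norm := abel) e1 + e2 + e3 + e4 + e5 + e6 + e7
    · linear_combination (norm := abel) f1 + f2 + f3 + f4 + f5 + f6 + f7
end
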